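/- arXiv:2004.12976 — 2 statements merged into one kernel-verified Lean document; each statement's English description precedes it below -/
import Mathlib

section
/- Let X = {s ∈ ℤ^ℕ : |sₙ| → ∞} and ψ(s) = t_s. Then X' := {s ∈ X : ψ(s) < ∞} is dense in X. More precisely, for any s ∈ X and n ∈ ℕ, the sequence sⁿ defined by sⁿ↾n = s↾n and sⁿ_k = k for k ≥ n lies in X, has t_{sⁿ} < ∞, and sⁿ → s in the product topology. -/
open Filter Topology

/-- One step of the model dynamics `𝓕(t,s) = (eᵗ - 1 - 2π|s₁|, σ s)`. -/
noncomputable def step (p : ℝ × (ℕ → ℤ)) : ℝ × (ℕ → ℤ) :=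
  (Real.exp p.1 - 1 - 2 * Real.pi * |((p.2 1 : ℤ) : ℝ)|, fun n => p.2 (n + 1))

/-- `(t,s) ∈ J(𝓕)`: every iterate has nonnegative first coordinate. -/
noncomputable def inJ (t : ℝ) (s : ℕ → ℤ) : Prop := ∀ n : ℕ, 0 ≤ (step^[n] (t, s)).1

/-- `t_s = inf {t ≥ 0 : (t,s) ∈ J(𝓕)}`, with value `∞` if the set is empty. -/
noncomputable def tmin (s : ℕ → ℤ) : ENNReal := sInf (ENNReal.ofReal '' {t : ℝ | inJ t s})

/-- `X = {s ∈ ℤ^ℕ : |sₙ| → ∞}`. -/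
def Xset : Set (ℕ → ℤ) := {s | Tendsto (fun n => |s n|) atTop atTop}

lemma step_snd (p : ℝ × (ℕ → ℤ)) (k : ℕ) : (step^[k] p).2 = fun m => p.2 (m + k) := by
  induction k with
  | zero => simp
  | succ k ih =>
    rw [Function.iterate_succ_apply']
    simp only [step, ih]
    funext m
    have h : m + 1 + k = m + (k + 1) := by omega
    rw [h]

lemma key (s : ℕ → ℤ) (n : ℕ) :
    (fun k : ℕ => if k < n then s k else (k : ℤ)) ∈ Xset ∧
    tmin (fun k : ℕ => if k < n then s k else (k : ℤ)) < ⊤ := by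
  set s' : ℕ → ℤ := fun k : ℕ => if k < n then s k else (k : ℤ) with hs'
  constructor
  · -- Xset
    have h1 : Tendsto (fun k : ℕ => (k : ℤ)) atTop atTop := tendsto_natCast_atTop_atTop
    apply tendsto_atTop_mono' atTop _ h1
    filter_upwards [eventually_ge_atTop n] with k hk
    simp only [hs', if_neg (not_lt.mpr hk)]
    exact le_abs_self _
  · -- tmin < ⊤
    set M : ℝ := ∑ k ∈ Finset.range n, |((s k : ℤ) : ℝ)| with hM
    have hM0 : 0 ≤ M := Finset.sum_nonneg fun _ _ => abs_nonneg _
    have hbound : ∀ k : ℕ, |((s' k : ℤ) : ℝ)| ≤ M + k := by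
      intro k
      by_cases hk : k < n
      · have : |((s k : ℤ) : ℝ)| ≤ M := by
          apply Finset.single_le_sum (f := fun j => |((s j : ℤ) : ℝ)|)
            (fun _ _ => abs_nonneg _) (Finset.mem_range.mpr hk)
        simp only [hs', if_pos hk]
        have : (0:ℝ) ≤ k := Nat.cast_nonneg k
        linarith [Finset.single_le_sum (f := fun j => |((s j : ℤ) : ℝ)|)
            (fun _ _ => abs_nonneg _) (Finset.mem_range.mpr hk)]
      · simp only [hs', if_neg hk]
        push_cast
        rw [abs_of_nonneg (by positivity : (0:ℝ) ≤ (k:ℝ))]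
        linarith
    set B : ℝ := 14 + 7 * M with hB
    have hBpos : (0:ℝ) ≤ B := by linarith
    -- invariant: first coordinate of k-th iterate is ≥ B + k
    have hinv : ∀ k : ℕ, B + k ≤ (step^[k] (B, s')).1 := by
      intro k
      induction k with
      | zero => simp
      | succ k ih =>
        rw [Function.iterate_succ_apply']
        have hsnd : (step^[k] (B, s')).2 1 = s' (1 + k) := by rw [step_snd]
        simp only [step, hsnd]
        set x : ℝ := (step^[k] (B, s')).1 with hx
        have hxk : B + k ≤ x := ih
        have hexp : Real.exp (x/2) * Real.exp (x/2) = Real.exp x := by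
          rw [← Real.exp_add]; ring_nf
        have h2 : 1 + x/2 ≤ Real.exp (x/2) := by
          have := Real.add_one_le_exp (x/2); linarith
        have habs : |((s' (1+k) : ℤ) : ℝ)| ≤ M + (1+k) := by
          have := hbound (1+k); push_cast at this ⊢; linarith
        have hpi : Real.pi < 3.15 := Real.pi_lt_d2
        have hpi0 : 0 < Real.pi := Real.pi_pos
        have habs0 : 0 ≤ |((s' (1+k) : ℤ) : ℝ)| := abs_nonneg _
        have hk0 : (0:ℝ) ≤ k := Nat.cast_nonneg k
        have hx0 : 0 ≤ x/2 := by linarith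
        have he : (1 + x/2) * (1 + x/2) ≤ Real.exp x := by
          have := mul_le_mul h2 h2 (by linarith) (Real.exp_nonneg (x/2))
          linarith [hexp ▸ this]
        have hpa : 2 * Real.pi * |((s' (1+k) : ℤ) : ℝ)| ≤ 2 * 3.15 * (M + (1 + k)) := by
          have h1 : 2 * Real.pi * |((s' (1+k) : ℤ) : ℝ)| ≤ 2 * Real.pi * (M + (1 + k)) := by
            apply mul_le_mul_of_nonneg_left habs (by positivity)
          have h2' : 2 * Real.pi * (M + (1 + k)) ≤ 2 * 3.15 * (M + (1 + k)) := by
            apply mul_le_mul_of_nonneg_right (by linarith) (by linarith)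
          linarith
        have hxx : (B + k) * (B + k) ≤ x * x := mul_le_mul hxk hxk (by linarith) (by linarith)
        have hBB : B * B = (14 + 7*M) * (14 + 7*M) := by rw [hB]
        have hBk : B * k = (14 + 7*M) * k := by rw [hB]
        push_cast
        nlinarith [he, hxx, hpa, hBB, hBk, hM0, hk0, mul_nonneg hM0 hk0, sq_nonneg M]
    have hJ : inJ B s' := by
      intro k
      have := hinv k
      have hk0 : (0:ℝ) ≤ k := Nat.cast_nonneg k
      linarith
    have : tmin s' ≤ ENNReal.ofReal B := by
      apply sInf_le
      exact ⟨B, hJ, rfl⟩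
    exact lt_of_le_of_lt this ENNReal.ofReal_lt_top

/-- For `s ∈ X` and `n ∈ ℕ`, the modification `sⁿ` (agreeing with `s` below `n` and
equal to `k` at `k ≥ n`) lies in `X`, has `t_{sⁿ} < ∞`, and `sⁿ → s`; hence
`{s ∈ X : t_s < ∞}` is dense in `X`. -/
theorem finite_tmin_dense (s : ℕ → ℤ) (hs : s ∈ Xset) (n : ℕ) :
    (fun k : ℕ => if k < n then s k else (k : ℤ)) ∈ Xset ∧
    tmin (fun k : ℕ => if k < n then s k else (k : ℤ)) < ⊤ ∧
    Tendsto (fun n : ℕ => (fun k : ℕ => if k < n then s k else (k : ℤ))) atTop (𝓝 s) ∧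
    s ∈ closure {s' | s' ∈ Xset ∧ tmin s' < ⊤} := by
  have hkey := key s
  have htend : Tendsto (fun n : ℕ => (fun k : ℕ => if k < n then s k else (k : ℤ))) atTop (𝓝 s) := by
    rw [tendsto_pi_nhds]
    intro k
    apply tendsto_const_nhds.congr'
    filter_upwards [eventually_gt_atTop k] with m hm
    simp [hm]
  refine ⟨(hkey n).1, (hkey n).2, htend, ?_⟩
  exact mem_closure_of_tendsto htend (Eventually.of_forall fun m => ⟨(hkey m).1, (hkey m).2⟩)
end

section
/- Let X = {s ∈ ℤ^ℕ : |sₙ| → ∞}, ψ(s) = t_s, and fix s ∈ X with t_s < ∞ and m ∈ ℕ. For each n define sⁿ ∈ ℤ^ℕ by sⁿᵢ = sᵢ for i ≠ n and sⁿₙ = min{|sₙ|, m}. Then t_{sⁿ} ≤ t_s for all n, and (t_{sⁿ}, sⁿ) → (t_s, s) in [0,∞) × ℤ^ℕ. -/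
open Filter Topology

lemma step_iter_fst_mono (k : ℕ) :
    ∀ (t t' : ℝ) (s s' : ℕ → ℤ), t ≤ t' → (∀ i, |s' i| ≤ |s i|) →
      (step^[k] (t, s)).1 ≤ (step^[k] (t', s')).1 := by
  induction k with
  | zero => intro t t' s s' h _; exact h
  | succ k ih =>
    intro t t' s s' h hss
    rw [Function.iterate_succ_apply, Function.iterate_succ_apply]
    apply ih
    · show Real.exp t - 1 - 2 * Real.pi * |((s 1 : ℤ) : ℝ)| ≤
        Real.exp t' - 1 - 2 * Real.pi * |((s' 1 : ℤ) : ℝ)|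
      have h1 : |((s' 1 : ℤ) : ℝ)| ≤ |((s 1 : ℤ) : ℝ)| := by
        rw [← Int.cast_abs, ← Int.cast_abs]; exact_mod_cast hss 1
      have h2 : Real.exp t ≤ Real.exp t' := Real.exp_le_exp.2 h
      nlinarith [Real.pi_pos]
    · intro i; exact hss (i + 1)

lemma step_iter_fst_congr (k : ℕ) :
    ∀ (t : ℝ) (s s' : ℕ → ℤ), (∀ i, 1 ≤ i → i ≤ k → s i = s' i) →
      (step^[k] (t, s)).1 = (step^[k] (t, s')).1 := by
  induction k with
  | zero => intro t s s' _; rfl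
  | succ k ih =>
    intro t s s' h
    rw [Function.iterate_succ_apply, Function.iterate_succ_apply]
    have h1 : s 1 = s' 1 := h 1 le_rfl (Nat.le_add_left 1 k)
    show (step^[k] (step (t, s))).1 = (step^[k] (step (t, s'))).1
    simp only [step, h1]
    exact ih _ _ _ (fun i h1i hik => h (i + 1) (Nat.le_add_left 1 i) (by omega))

lemma step_iter_fst_continuous (k : ℕ) :
    ∀ s : ℕ → ℤ, Continuous (fun t => (step^[k] (t, s)).1) := by
  induction k with
  | zero => intro s; exact continuous_id
  | succ k ih =>
    intro s
    have : (fun t => (step^[k + 1] (t, s)).1) =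
        (fun u => (step^[k] (u, fun n => s (n + 1))).1) ∘
          (fun t => Real.exp t - 1 - 2 * Real.pi * |((s 1 : ℤ) : ℝ)|) := by
      funext t; rw [Function.iterate_succ_apply]; rfl
    rw [this]
    exact (ih _).comp (by continuity)

lemma inJ_mono {t t' : ℝ} {s s' : ℕ → ℤ} (h : inJ t s) (ht : t ≤ t')
    (hss : ∀ i, |s' i| ≤ |s i|) : inJ t' s' :=
  fun k => le_trans (h k) (step_iter_fst_mono k t t' s s' ht hss)

lemma inJ_nonneg {t : ℝ} {s : ℕ → ℤ} (h : inJ t s) : 0 ≤ t := h 0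

lemma tmin_le_ofReal {t : ℝ} {s : ℕ → ℤ} (h : inJ t s) : tmin s ≤ ENNReal.ofReal t :=
  sInf_le ⟨t, h, rfl⟩

lemma inJ_tmin {s : ℕ → ℤ} (h : tmin s < ⊤) : inJ (tmin s).toReal s := by
  have hne : {t : ℝ | inJ t s}.Nonempty := by
    by_contra hc
    rw [Set.not_nonempty_iff_eq_empty] at hc
    simp [tmin, hc] at h
  have hbdd : BddBelow {t : ℝ | inJ t s} := ⟨0, fun t ht => inJ_nonneg ht⟩
  have hclosed : IsClosed {t : ℝ | inJ t s} := by
    have : {t : ℝ | inJ t s} = ⋂ k : ℕ, {t : ℝ | 0 ≤ (step^[k] (t, s)).1} := by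
      ext t; simp [inJ, Set.mem_iInter]
    rw [this]
    exact isClosed_iInter fun k =>
      isClosed_le continuous_const (step_iter_fst_continuous k s)
  have hmem : sInf {t : ℝ | inJ t s} ∈ {t : ℝ | inJ t s} := hclosed.csInf_mem hne hbdd
  have hT : tmin s = ENNReal.ofReal (sInf {t : ℝ | inJ t s}) := by
    apply le_antisymm
    · exact sInf_le ⟨_, hmem, rfl⟩
    · apply le_sInf
      rintro x ⟨t, ht, rfl⟩
      exact ENNReal.ofReal_le_ofReal (csInf_le hbdd ht)
  rw [hT, ENNReal.toReal_ofReal (inJ_nonneg hmem)]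
  exact hmem

/-- For `s ∈ X` with `t_s < ∞` and `m ∈ ℕ`, the modifications `sⁿ` (with `sⁿₙ = min{|sₙ|, m}`
and `sⁿᵢ = sᵢ` otherwise) satisfy `t_{sⁿ} ≤ t_s` and `(t_{sⁿ}, sⁿ) → (t_s, s)`. -/
theorem modified_tmin_tendsto (s : ℕ → ℤ) (hs : s ∈ Xset) (hfin : tmin s < ⊤) (m : ℕ) :
    (∀ n : ℕ, tmin (fun i => if i = n then min |s n| (m : ℤ) else s i) ≤ tmin s) ∧
    Tendsto (fun n : ℕ =>
        ((tmin (fun i => if i = n then min |s n| (m : ℤ) else s i)),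
          (fun i => if i = n then min |s n| (m : ℤ) else s i)))
      atTop (𝓝 (tmin s, s)) := by
  set f : ℕ → ℕ → ℤ := fun n i => if i = n then min |s n| (m : ℤ) else s i with hf
  have habs : ∀ n i, |f n i| ≤ |s i| := by
    intro n i
    simp only [hf]
    by_cases h : i = n
    · subst h
      rw [if_pos rfl, abs_of_nonneg (le_min (abs_nonneg _) (Int.ofNat_nonneg m))]
      exact min_le_left _ _
    · rw [if_neg h]
  have h1 : ∀ n : ℕ, tmin (f n) ≤ tmin s := by
    intro n
    apply sInf_le_sInf
    apply Set.image_mono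
    intro t ht
    exact inJ_mono ht le_rfl (habs n)
  refine ⟨h1, Tendsto.prodMk_nhds ?_ ?_⟩
  · refine tendsto_order.2 ⟨?_, ?_⟩
    · intro a ha
      by_contra hc
      rw [Filter.not_eventually] at hc
      have ha' : a < ⊤ := ha.trans hfin
      have key : inJ a.toReal s := by
        intro k
        obtain ⟨n, hn, hle⟩ := (hc.and_eventually (eventually_ge_atTop (k + 1))).exists
        have hle' : tmin (f n) ≤ a := not_lt.1 hn
        have hfinn : tmin (f n) < ⊤ := lt_of_le_of_lt hle' ha'
        have hJn : inJ a.toReal (f n) :=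
          inJ_mono (inJ_tmin hfinn)
            (ENNReal.toReal_mono ha'.ne hle') (fun i => le_rfl)
        have heq : (step^[k] (a.toReal, s)).1 = (step^[k] (a.toReal, f n)).1 := by
          apply step_iter_fst_congr
          intro i h1i hik
          simp only [hf]
          rw [if_neg (by omega)]
        rw [heq]
        exact hJn k
      have := tmin_le_ofReal key
      rw [ENNReal.ofReal_toReal ha'.ne] at this
      exact ha.not_ge this
    · intro b hb
      filter_upwards with n
      exact lt_of_le_of_lt (h1 n) hb
  · rw [tendsto_pi_nhds]
    intro i
    refine tendsto_const_nhds.congr' ?_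
    filter_upwards [eventually_gt_atTop i] with n hn
    simp only [hf, if_neg hn.ne]
end
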